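/- With h_ε as above and c ∈ A₊ a contraction, the hereditary subalgebra generated by (c−2ε)₊ equals the closure of h_ε(c)·A·h_ε(c). -/

import Mathlib

/-- The function `h_ε : (0,1] → [0,1]` which is `0` on `(0,2ε]`, `1` on `[3ε,1]` and
linear on `[2ε,3ε]`, extended by the same formula to all of `ℝ`. -/
noncomputable def hFun (ε : ℝ) (t : ℝ) : ℝ := min 1 (max ((t - 2 * ε) / ε) 0)

/-- The positive part `(a − δ)₊` of an element, via functional calculus. -/
noncomputable def cutDown {A : Type*} [NonUnitalCStarAlgebra A] [PartialOrder A]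
    [StarOrderedRing A] (a : A) (δ : ℝ) : A :=
  cfcₙ (fun t : ℝ => max (t - δ) 0) a

open Filter Topology

/-- If `a` is in the closure of `bAb`, then the closure of `aAa` is contained in the
closure of `bAb`. -/
private lemma her_subset {A : Type*} [NonUnitalCStarAlgebra A] {a b : A}
    (ha : a ∈ closure {y : A | ∃ z : A, y = b * z * b}) :
    closure {y : A | ∃ z : A, y = a * z * a} ⊆
      closure {y : A | ∃ z : A, y = b * z * b} := by
  refine closure_minimal ?_ isClosed_closure
  rintro _ ⟨z, rfl⟩
  obtain ⟨u, hu, hlim⟩ := mem_closure_iff_seq_limit.mp ha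
  refine mem_closure_of_tendsto ((hlim.mul tendsto_const_nhds).mul hlim) ?_
  filter_upwards with n
  obtain ⟨w, hw⟩ := hu n
  exact ⟨w * b * z * b * w, by rw [hw]; simp only [mul_assoc]⟩

/-- Approximation lemma: if `F` can be approximated uniformly by functions of the form
`G * K * G`, then `cfcₙ F c` lies in the closure of `cfcₙ G c · A · cfcₙ G c`. -/
private lemma cfc_mem_closure {A : Type*} [NonUnitalCStarAlgebra A]
    (c : A) (hsa : IsSelfAdjoint c) (F G : ℝ → ℝ)
    (hF : Continuous F) (hF0 : F 0 = 0) (hG : Continuous G) (hG0 : G 0 = 0)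
    (happrox : ∀ r > (0 : ℝ), ∃ Fr K : ℝ → ℝ, Continuous Fr ∧ Continuous K ∧ K 0 = 0 ∧
      (∀ t, G t * K t * G t = Fr t) ∧ ∀ t, |F t - Fr t| < r) :
    cfcₙ F c ∈ closure {y : A | ∃ z : A, y = cfcₙ G c * z * cfcₙ G c} := by
  rw [Metric.mem_closure_iff]
  intro r hr
  obtain ⟨Fr, K, hFr, hK, hK0, hid, hnear⟩ := happrox r hr
  have hFr0 : Fr 0 = 0 := by rw [← hid 0, hG0]; ring
  refine ⟨cfcₙ G c * cfcₙ K c * cfcₙ G c, ⟨cfcₙ K c, rfl⟩, ?_⟩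
  have h1 : cfcₙ G c * cfcₙ K c * cfcₙ G c = cfcₙ Fr c := by
    rw [← cfcₙ_mul G K c hG.continuousOn hG0 hK.continuousOn hK0,
      ← cfcₙ_mul (fun x => G x * K x) G c ((hG.mul hK).continuousOn) (by simp [hG0]) hG.continuousOn hG0]
    exact cfcₙ_congr fun t _ => hid t
  rw [h1, dist_eq_norm, ← cfcₙ_sub F Fr c hF.continuousOn hF0 hFr.continuousOn hFr0]
  exact norm_cfcₙ_lt fun x _ => by simpa using hnear x

/-- **Hereditary subalgebras agree:** for a positive contraction `c` and `ε > 0`, the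
hereditary subalgebra generated by `(c − 2ε)₊` equals the closure of `h_ε(c)·A·h_ε(c)`. -/
theorem hereditary_cutDown_eq_hereditary_hFun {A : Type*} [NonUnitalCStarAlgebra A]
    [PartialOrder A] [StarOrderedRing A] (c : A) (hc : 0 ≤ c) (hc1 : ‖c‖ ≤ 1)
    (ε : ℝ) (hε : 0 < ε) :
    closure {y : A | ∃ z : A, y = cutDown c (2 * ε) * z * cutDown c (2 * ε)} =
      closure {y : A | ∃ z : A, y = cfcₙ (hFun ε) c * z * cfcₙ (hFun ε) c} := by
  have hsa : IsSelfAdjoint c := hc.isSelfAdjoint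
  set F : ℝ → ℝ := fun t => max (t - 2 * ε) 0 with hFdef
  have hFcont : Continuous F := by fun_prop
  have hF0 : F 0 = 0 := max_eq_right (by linarith)
  have hGcont : Continuous (hFun ε) := by unfold hFun; fun_prop
  have hG0 : hFun ε 0 = 0 := by
    unfold hFun
    rw [max_eq_right (div_nonpos_of_nonpos_of_nonneg (by linarith) hε.le),
      min_eq_right zero_le_one]
  have hGnonneg : ∀ t, 0 ≤ hFun ε t := fun t =>
    le_min zero_le_one (le_max_right _ _)
  have hcut : cutDown c (2 * ε) = cfcₙ F c := rfl
  apply subset_antisymm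
  · -- cutDown ∈ closure of hFun side
    refine her_subset ?_
    rw [hcut]
    refine cfc_mem_closure c hsa F (hFun ε) hFcont hF0 hGcont hG0 ?_
    intro r hr
    set δ : ℝ := r / 2 with hδdef
    have hδ : 0 < δ := by positivity
    have hcδ : (0 : ℝ) < min 1 (δ / ε) := lt_min one_pos (by positivity)
    refine ⟨fun t => max (t - 2 * ε - δ) 0,
      fun t => max (t - 2 * ε - δ) 0 / (max (hFun ε t) (min 1 (δ / ε))) ^ 2,
      by fun_prop, ?_, ?_, ?_, ?_⟩
    · apply Continuous.div (by fun_prop) (by fun_prop)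
      intro t
      exact pow_ne_zero 2 (lt_of_lt_of_le hcδ (le_max_right _ _)).ne'
    · show max (0 - 2 * ε - δ) 0 / (max (hFun ε 0) (min 1 (δ / ε))) ^ 2 = 0
      rw [max_eq_right (by linarith), zero_div]
    · intro t
      show hFun ε t * (max (t - 2 * ε - δ) 0 / (max (hFun ε t) (min 1 (δ / ε))) ^ 2) *
        hFun ε t = max (t - 2 * ε - δ) 0
      by_cases ht : t ≤ 2 * ε + δ
      · rw [max_eq_right (by linarith), zero_div, mul_zero, zero_mul]
      · push_neg at ht
        have hδε : 0 < δ / ε := by positivity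
        have hx : δ / ε < (t - 2 * ε) / ε := by
          rw [div_lt_div_iff_of_pos_right hε]; nlinarith
        have hg : hFun ε t = min 1 ((t - 2 * ε) / ε) := by
          unfold hFun; rw [max_eq_left (hδε.trans hx).le]
        have hgpos : 0 < hFun ε t := by
          rw [hg]; exact lt_min one_pos (hδε.trans hx)
        have hG' : max (hFun ε t) (min 1 (δ / ε)) = hFun ε t :=
          max_eq_left (by rw [hg]; exact min_le_min le_rfl hx.le)
        rw [hG']
        field_simp
    · intro t
      calc |F t - max (t - 2 * ε - δ) 0| ≤ |(t - 2 * ε) - (t - 2 * ε - δ)| :=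
            abs_max_sub_max_le_abs _ _ _
        _ = δ := by rw [show (t - 2*ε) - (t - 2*ε - δ) = δ by ring, abs_of_pos hδ]
        _ < r := by rw [hδdef]; linarith
  · -- hFun ∈ closure of cutDown side
    refine her_subset ?_
    rw [hcut]
    refine cfc_mem_closure c hsa (hFun ε) F hGcont hG0 hFcont hF0 ?_
    intro r hr
    set δ : ℝ := r / 2 with hδdef
    have hδ : 0 < δ := by positivity
    refine ⟨fun t => max (hFun ε t - δ) 0,
      fun t => max (hFun ε t - δ) 0 / (max (F t) (ε * δ)) ^ 2,
      by fun_prop, ?_, ?_, ?_, ?_⟩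
    · apply Continuous.div (by fun_prop) (by fun_prop)
      intro t
      exact pow_ne_zero 2 (lt_of_lt_of_le (by positivity) (le_max_right _ _)).ne'
    · show max (hFun ε 0 - δ) 0 / (max (F 0) (ε * δ)) ^ 2 = 0
      rw [hG0, max_eq_right (by linarith), zero_div]
    · intro t
      show F t * (max (hFun ε t - δ) 0 / (max (F t) (ε * δ)) ^ 2) * F t =
        max (hFun ε t - δ) 0
      by_cases ht : hFun ε t ≤ δ
      · rw [max_eq_right (by linarith), zero_div, mul_zero, zero_mul]
      · push_neg at ht
        have h2 : δ < max ((t - 2 * ε) / ε) 0 := lt_of_lt_of_le ht (min_le_right _ _)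
        have h3 : δ < (t - 2 * ε) / ε := by
          rcases lt_max_iff.mp h2 with h | h
          · exact h
          · linarith
        have h4 : ε * δ < t - 2 * ε := by
          rw [lt_div_iff₀ hε] at h3; nlinarith
        have hFt : F t = t - 2 * ε := max_eq_left (by nlinarith)
        have hF' : max (F t) (ε * δ) = F t := max_eq_left (by rw [hFt]; linarith)
        have hFpos : 0 < F t := by rw [hFt]; nlinarith
        rw [hF']
        field_simp
    · intro t
      have h1 : hFun ε t = max (hFun ε t) 0 := (max_eq_left (hGnonneg t)).symm
      calc |hFun ε t - max (hFun ε t - δ) 0|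
          = |max (hFun ε t) 0 - max (hFun ε t - δ) 0| := by rw [← h1]
        _ ≤ |hFun ε t - (hFun ε t - δ)| := abs_max_sub_max_le_abs _ _ _
        _ = δ := by rw [show hFun ε t - (hFun ε t - δ) = δ by ring, abs_of_pos hδ]
        _ < r := by rw [hδdef]; linarith
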